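/- Let (C, ⊥) be an orthogonal category, W a set of morphisms of C, and L : C → C[W⁻¹] the localization with the induced orthogonality relation ⊥_W. The pullback functor L* = (−)∘L from functors C[W⁻¹] → Alg_As(M) to functors C → Alg_As(M) restricts to an equivalence between the category of ⊥_W-commutative functors on C[W⁻¹] and the category of ⊥-commutative functors on C that send every morphism in W to an isomorphism. -/

import Mathlib

open CategoryTheory MonoidalCategory

/-- An orthogonality relation on a category `C`. -/
structure OrthRel (C : Type*) [Category C] where
  rel : ∀ ⦃a b t : C⦄, (a ⟶ t) → (b ⟶ t) → Prop
  symm : ∀ ⦃a b t : C⦄ (f₁ : a ⟶ t) (f₂ : b ⟶ t), rel f₁ f₂ → rel f₂ f₁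
  stable : ∀ ⦃a b t a' b' t' : C⦄ (f₁ : a ⟶ t) (f₂ : b ⟶ t)
      (h₁ : a' ⟶ a) (h₂ : b' ⟶ b) (g : t ⟶ t'),
      rel f₁ f₂ → rel (h₁ ≫ f₁ ≫ g) (h₂ ≫ f₂ ≫ g)

/-- A functor `A : C ⥤ Alg_As(M)` (monoid objects in `M`) is `⊥`-commutative if for all
orthogonal pairs `(f₁ : c₁ → c) ⊥ (f₂ : c₂ → c)` one has
`μ_c ∘ (A f₁ ⊗ A f₂) = μ_c^op ∘ (A f₁ ⊗ A f₂)`, where `μ^op = μ ∘ β`. -/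
def PerpCommutative {C : Type*} [Category C] (P : OrthRel C)
    {M : Type*} [Category M] [MonoidalCategory M] [BraidedCategory M]
    (A : C ⥤ Mon M) : Prop :=
  ∀ ⦃c₁ c₂ c : C⦄ (f₁ : c₁ ⟶ c) (f₂ : c₂ ⟶ c), P.rel f₁ f₂ →
    ((A.map f₁).hom ⊗ₘ (A.map f₂).hom) ≫ MonObj.mul (X := (A.obj c).X) =
      (β_ (A.obj c₁).X (A.obj c₂).X).hom ≫ ((A.map f₂).hom ⊗ₘ (A.map f₁).hom) ≫ MonObj.mul (X := (A.obj c).X)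

/-- The "commutation" orthogonality relation attached to a functor to monoid objects:
two morphisms with common target are related iff the images multiply commutatively. -/
def commOrthRel {D : Type*} [Category D] {M : Type*} [Category M] [MonoidalCategory M]
    [SymmetricCategory M] (B : D ⥤ Mon M) : OrthRel D where
  rel {x y z} g₁ g₂ :=
    ((B.map g₁).hom ⊗ₘ (B.map g₂).hom) ≫ MonObj.mul (X := (B.obj z).X) =
      (β_ (B.obj x).X (B.obj y).X).hom ≫ ((B.map g₂).hom ⊗ₘ (B.map g₁).hom) ≫ MonObj.mul (X := (B.obj z).X)
  symm {x y z} g₁ g₂ h := by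
    rw [h, ← Category.assoc, SymmetricCategory.symmetry, Category.id_comp]
  stable {a b t a' b' t'} f₁ f₂ h₁ h₂ g h := by
    simp only [Functor.map_comp, Mon.comp_hom', ← MonoidalCategory.tensorHom_comp_tensorHom,
      Category.assoc, ← IsMonHom.mul_hom]
    have h' := congrArg (· ≫ (B.map g).hom) h
    simp only [Category.assoc] at h'
    rw [h', ← Category.assoc, BraidedCategory.braiding_naturality, Category.assoc]

/-- Transfer an isomorphism of underlying objects to a full subcategory. -/
def fullSubIso {C : Type*} [Category C] {Z : C → Prop} {X Y : ObjectProperty.FullSubcategory Z}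
    (i : X.obj ≅ Y.obj) : X ≅ Y where
  hom := ObjectProperty.homMk i.hom
  inv := ObjectProperty.homMk i.inv
  hom_inv_id := ObjectProperty.hom_ext _ i.hom_inv_id
  inv_hom_id := ObjectProperty.hom_ext _ i.inv_hom_id

/-- Let `(C,⊥)` be an orthogonal category, `W` a set of morphisms, `L = W.Q` the
localization functor and `⊥_W` the induced orthogonality relation on `C[W⁻¹]` (the
smallest one making `L` orthogonal). For a bicomplete closed symmetric monoidal
category `M`, the pullback functor `L* = (−)∘L` restricts to an equivalence between
the category of `⊥_W`-commutative functors `C[W⁻¹] ⥤ Alg_As(M)` and the category of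
`⊥`-commutative functors `C ⥤ Alg_As(M)` sending every morphism of `W` to an
isomorphism. -/
theorem stmt3 {C : Type*} [Category C] (P : OrthRel C) (W : MorphismProperty C)
    {M : Type*} [Category M] [MonoidalCategory M] [SymmetricCategory M]
    [MonoidalClosed M] [Limits.HasLimits M] [Limits.HasColimits M]
    (R : OrthRel W.Localization)
    (hR : ∀ ⦃a b t : C⦄ (f₁ : a ⟶ t) (f₂ : b ⟶ t),
      P.rel f₁ f₂ → R.rel (W.Q.map f₁) (W.Q.map f₂))
    (hRmin : ∀ R' : OrthRel W.Localization,
      (∀ ⦃a b t : C⦄ (f₁ : a ⟶ t) (f₂ : b ⟶ t),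
        P.rel f₁ f₂ → R'.rel (W.Q.map f₁) (W.Q.map f₂)) →
      ∀ ⦃x y z : W.Localization⦄ (g₁ : x ⟶ z) (g₂ : y ⟶ z),
        R.rel g₁ g₂ → R'.rel g₁ g₂) :
    ∃ e : ObjectProperty.FullSubcategory (fun B : W.Localization ⥤ Mon M => PerpCommutative R B) ≌
        ObjectProperty.FullSubcategory (fun A : C ⥤ Mon M => PerpCommutative P A ∧
          ∀ ⦃x y : C⦄ (f : x ⟶ y), W f → IsIso (A.map f)),
      -- the equivalence is (isomorphic to) the restriction of the pullback `L*`
      Nonempty ((e.functor ⋙ ObjectProperty.ι _) ≅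
        (ObjectProperty.ι _ ⋙ (Functor.whiskeringLeft C W.Localization (Mon M)).obj W.Q)) := by
  classical
  set pred₁ : (W.Localization ⥤ Mon M) → Prop := fun B => PerpCommutative R B with hpred₁
  set pred₂ : (C ⥤ Mon M) → Prop := fun A => PerpCommutative P A ∧
      ∀ ⦃x y : C⦄ (f : x ⟶ y), W f → IsIso (A.map f) with hpred₂
  -- the base equivalence from the localization construction
  let e0 := Localization.Construction.whiskeringLeftEquivalence W (Mon M)
  have hF : ∀ B : ObjectProperty.FullSubcategory pred₁,
      pred₂ ((ObjectProperty.ι pred₁ ⋙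
        (Functor.whiskeringLeft C W.Localization (Mon M)).obj W.Q).obj B) := by
    intro B
    constructor
    · intro c₁ c₂ c f₁ f₂ hrel
      exact B.property (W.Q.map f₁) (W.Q.map f₂) (hR f₁ f₂ hrel)
    · intro x y f hf
      have : IsIso (W.Q.map f) := W.Q_inverts f hf
      exact inferInstanceAs (IsIso (B.obj.map (W.Q.map f)))
  let F : ObjectProperty.FullSubcategory pred₁ ⥤ ObjectProperty.FullSubcategory pred₂ :=
    ObjectProperty.lift pred₂ (ObjectProperty.ι pred₁ ⋙
      (Functor.whiskeringLeft C W.Localization (Mon M)).obj W.Q) hF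
  -- the functor into `W.FunctorsInverting (Mon M)`
  let toInv : ObjectProperty.FullSubcategory pred₂ ⥤ W.FunctorsInverting (Mon M) :=
    ObjectProperty.lift _ (ObjectProperty.ι pred₂)
      (fun A => fun _ _ f hf => A.property.2 f hf)
  have hG : ∀ A : ObjectProperty.FullSubcategory pred₂,
      pred₁ ((toInv ⋙ Localization.Construction.WhiskeringLeftEquivalence.inverse
        W (Mon M)).obj A) := by
    intro A
    have hcomm : PerpCommutative P
        (W.Q ⋙ Localization.Construction.lift A.obj (fun _ _ f hf => A.property.2 f hf)) := by
      rw [Localization.Construction.fac A.obj (fun _ _ f hf => A.property.2 f hf)]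
      exact A.property.1
    intro x y z g₁ g₂ hrel
    exact hRmin (commOrthRel (Localization.Construction.lift A.obj
        (fun _ _ f hf => A.property.2 f hf)))
      (fun a b t f₁ f₂ hp => hcomm f₁ f₂ hp) g₁ g₂ hrel
  let G : ObjectProperty.FullSubcategory pred₂ ⥤ ObjectProperty.FullSubcategory pred₁ :=
    ObjectProperty.lift pred₁
      (toInv ⋙ Localization.Construction.WhiskeringLeftEquivalence.inverse W (Mon M)) hG
  let η : 𝟭 (ObjectProperty.FullSubcategory pred₁) ≅ F ⋙ G :=
    NatIso.ofComponents (fun B => fullSubIso (e0.unitIso.app B.obj))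
      (fun {B B'} f => ObjectProperty.hom_ext _ (e0.unitIso.hom.naturality f.hom))
  let ε : G ⋙ F ≅ 𝟭 (ObjectProperty.FullSubcategory pred₂) :=
    NatIso.ofComponents (fun A => fullSubIso
      ((ObjectProperty.ι _).mapIso (e0.counitIso.app (toInv.obj A))))
      (fun {A A'} f => ObjectProperty.hom_ext _ (by have := congrArg InducedCategory.Hom.hom (e0.counitIso.hom.naturality (toInv.map f)); exact this))
  refine ⟨CategoryTheory.Equivalence.mk F G η ε, ⟨?_⟩⟩
  exact ObjectProperty.liftCompιIso pred₂ _ hF
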